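/- For any constant A > 0, Σ_Λ P_Λ(T)³ ≪ T⁶·log log T, where the sum ranges over primitive rank-2 sublattices Λ ⊂ ℤ³ that are bounded by T (possess a basis of vectors of norm ≤ T) and satisfy T²/(log T)^A < det(Λ) ≤ T², and P_Λ(T) is the number of primitive vectors of ℤ³ in Λ of norm at most T. -/

import Mathlib

/-- Euclidean norm of an integer vector. -/
noncomputable def vnorm {n : ℕ} (v : Fin n → ℤ) : ℝ := Real.sqrt (∑ i, ((v i : ℝ)) ^ 2)

/-- A vector of `ℤ^n` is primitive if the gcd of its coordinates is 1. -/
def IsPrimitive {n : ℕ} (v : Fin n → ℤ) : Prop := Finset.univ.gcd v = 1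

def toRealVec {n : ℕ} (v : Fin n → ℤ) : Fin n → ℝ := fun i => (v i : ℝ)

/-- A sublattice `Λ ⊆ ℤ^n` is primitive if `Λ = ℤ^n ∩ span_ℝ(Λ)`. -/
def IsPrimitiveLattice {n : ℕ} (Λ : Submodule ℤ (Fin n → ℤ)) : Prop :=
  ∀ v : Fin n → ℤ, v ∈ Λ ↔ toRealVec v ∈ Submodule.span ℝ (toRealVec '' (Λ : Set (Fin n → ℤ)))

/-- The orthogonal complement lattice `Λ^⊥ = {v ∈ ℤ^n : v·u = 0 for all u ∈ Λ}`. -/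
def orthLat {n : ℕ} (Λ : Submodule ℤ (Fin n → ℤ)) : Submodule ℤ (Fin n → ℤ) where
  carrier := {v | ∀ u ∈ Λ, ∑ i, v i * u i = 0}
  zero_mem' := by intro u _; simp
  add_mem' := by
    intro a b ha hb u hu
    have h : ∑ i, (a + b) i * u i = (∑ i, a i * u i) + ∑ i, b i * u i := by
      simp [add_mul, Finset.sum_add_distrib]
    rw [h, ha u hu, hb u hu, add_zero]
  smul_mem' := by
    intro c v hv u hu
    have h : ∑ i, (c • v) i * u i = c * ∑ i, v i * u i := by
      simp [Finset.mul_sum, mul_assoc]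
    rw [h, hv u hu, mul_zero]

/-- Determinant of the Gram matrix of a basis of a sublattice of `ℤ^n`;
its square root is the covolume of the lattice. -/
noncomputable def gramDet {n m : ℕ} {Λ : Submodule ℤ (Fin n → ℤ)} (b : Module.Basis (Fin m) ℤ Λ) : ℤ :=
  (Matrix.of fun i j : Fin m => ∑ k, (b i).1 k * (b j).1 k).det

/-- `N_Λ(T)`: the number of nonzero vectors of `Λ` of norm at most `T`. -/
noncomputable def latCount {n : ℕ} (Λ : Submodule ℤ (Fin n → ℤ)) (T : ℝ) : ℕ :=
  Set.ncard {v : Fin n → ℤ | v ∈ Λ ∧ v ≠ 0 ∧ vnorm v ≤ T}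

/-- `P_Λ(T)`: the number of primitive vectors of `ℤ^n` lying in `Λ` of norm at most `T`. -/
noncomputable def latPrimCount {n : ℕ} (Λ : Submodule ℤ (Fin n → ℤ)) (T : ℝ) : ℕ :=
  Set.ncard {v : Fin n → ℤ | v ∈ Λ ∧ IsPrimitive v ∧ vnorm v ≤ T}


namespace SCLD

def dot (u v : Fin 3 → ℤ) : ℤ := ∑ i, u i * v i

def cross (u v : Fin 3 → ℤ) : Fin 3 → ℤ :=
  ![u 1 * v 2 - u 2 * v 1, u 2 * v 0 - u 0 * v 2, u 0 * v 1 - u 1 * v 0]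

lemma dot_expand (u v : Fin 3 → ℤ) : dot u v = u 0 * v 0 + u 1 * v 1 + u 2 * v 2 := by
  simp [dot, Fin.sum_univ_three]

lemma lagrange (u v : Fin 3 → ℤ) :
    dot (cross u v) (cross u v) = dot u u * dot v v - dot u v ^ 2 := by
  simp [dot_expand, cross]; ring

lemma dot_self_nonneg (u : Fin 3 → ℤ) : 0 ≤ dot u u := by
  rw [dot_expand]; nlinarith [sq_nonneg (u 0), sq_nonneg (u 1), sq_nonneg (u 2)]

lemma dot_self_eq_zero {u : Fin 3 → ℤ} (h : dot u u = 0) : u = 0 := by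
  rw [dot_expand] at h
  have h0 : u 0 = 0 := by nlinarith [sq_nonneg (u 0), sq_nonneg (u 1), sq_nonneg (u 2)]
  have h1 : u 1 = 0 := by nlinarith [sq_nonneg (u 0), sq_nonneg (u 1), sq_nonneg (u 2)]
  have h2 : u 2 = 0 := by nlinarith [sq_nonneg (u 0), sq_nonneg (u 1), sq_nonneg (u 2)]
  funext i; fin_cases i <;> assumption

lemma cauchy_schwarz (u v : Fin 3 → ℤ) : dot u v ^ 2 ≤ dot u u * dot v v := by
  nlinarith [lagrange u v, dot_self_nonneg (cross u v)]

lemma dot_cross_self_left (u v : Fin 3 → ℤ) : dot u (cross u v) = 0 := by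
  simp [dot_expand, cross]; ring

lemma dot_cross_self_right (u v : Fin 3 → ℤ) : dot v (cross u v) = 0 := by
  simp [dot_expand, cross]; ring

lemma cross_combo_right (u w : Fin 3 → ℤ) (c₁ c₂ : ℤ) :
    cross u (c₁ • u + c₂ • w) = c₂ • cross u w := by
  funext i; fin_cases i <;> simp [cross] <;> ring

lemma cross_combo_left (u w : Fin 3 → ℤ) (c₁ c₂ : ℤ) :
    cross (c₁ • u + c₂ • w) w = c₁ • cross u w := by
  funext i; fin_cases i <;> simp [cross] <;> ring

lemma cross_eq_zero_dep {u v : Fin 3 → ℤ} (h : cross u v = 0) :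
    dot u u • v = dot u v • u := by
  have h0 := congrFun h 0
  have h1 := congrFun h 1
  have h2 := congrFun h 2
  simp [cross] at h0 h1 h2
  funext i; fin_cases i <;> simp [dot_expand]
  · linear_combination (-(u 1))*h2 + (u 2)*h1
  · linear_combination (u 0)*h2 - (u 2)*h0
  · linear_combination (-(u 0))*h1 + (u 1)*h0

/-- key triple identity -/
lemma triple_identity (u w x : Fin 3 → ℤ) (i : Fin 3) :
    dot (cross u w) (cross u w) * x i =
      dot (cross x w) (cross u w) * u i - dot (cross x u) (cross u w) * w i
        + dot x (cross u w) * cross u w i := by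
  fin_cases i <;> simp [dot_expand, cross] <;> ring

lemma dot_smul_right (u v : Fin 3 → ℤ) (c : ℤ) : dot u (c • v) = c * dot u v := by
  simp [dot_expand]; ring

lemma vnorm_eq (v : Fin 3 → ℤ) : vnorm v = Real.sqrt ((dot v v : ℝ)) := by
  rw [vnorm, dot_expand]; push_cast [Fin.sum_univ_three]; ring_nf

lemma vnorm_sq (v : Fin 3 → ℤ) : vnorm v ^ 2 = ((dot v v : ℝ)) := by
  rw [vnorm_eq, Real.sq_sqrt]; exact_mod_cast dot_self_nonneg v

lemma vnorm_nonneg (v : Fin 3 → ℤ) : 0 ≤ vnorm v := Real.sqrt_nonneg _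

lemma vnorm_le_iff {v : Fin 3 → ℤ} {T : ℝ} (hT : 0 ≤ T) :
    vnorm v ≤ T ↔ ((dot v v : ℝ)) ≤ T ^ 2 := by
  rw [vnorm_eq]
  constructor
  · intro h
    have := Real.sq_sqrt (show (0:ℝ) ≤ (dot v v : ℝ) by exact_mod_cast dot_self_nonneg v)
    nlinarith [Real.sqrt_nonneg ((dot v v : ℝ))]
  · intro h
    calc Real.sqrt ((dot v v : ℝ)) ≤ Real.sqrt (T ^ 2) := Real.sqrt_le_sqrt h
    _ = T := by rw [Real.sqrt_sq hT]

lemma vnorm_smul (c : ℤ) (v : Fin 3 → ℤ) : vnorm (c • v) = |(c:ℝ)| * vnorm v := by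
  rw [vnorm_eq, vnorm_eq]
  have : (dot (c • v) (c • v) : ℝ) = (c:ℝ)^2 * (dot v v : ℝ) := by
    push_cast [dot_expand]; simp; ring
  rw [this, Real.sqrt_mul (sq_nonneg _), Real.sqrt_sq_eq_abs]

end SCLD
section LatticeLemmas

open SCLD

variable {Λ : Submodule ℤ (Fin 3 → ℤ)} (b : Module.Basis (Fin 2) ℤ Λ)

lemma exists_coords {v : Fin 3 → ℤ} (hv : v ∈ Λ) :
    ∃ c₁ c₂ : ℤ, v = c₁ • (b 0).1 + c₂ • (b 1).1 := by
  refine ⟨b.repr ⟨v, hv⟩ 0, b.repr ⟨v, hv⟩ 1, ?_⟩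
  have h := b.sum_repr ⟨v, hv⟩
  rw [Fin.sum_univ_two] at h
  have := congrArg (Subtype.val) h
  simpa using this.symm

lemma coords_indep {c₁ c₂ : ℤ} (h : c₁ • (b 0).1 + c₂ • (b 1).1 = 0) :
    c₁ = 0 ∧ c₂ = 0 := by
  have hli : LinearIndependent ℤ (fun i => ((b i : Λ) : Fin 3 → ℤ)) := by
    exact b.linearIndependent.map' Λ.subtype (Submodule.ker_subtype Λ)
  have := Fintype.linearIndependent_iff.1 hli ![c₁, c₂] ?_
  · exact ⟨this 0, this 1⟩
  · rw [Fin.sum_univ_two]; simpa using h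

lemma lambda_ne_zero : cross (b 0).1 (b 1).1 ≠ 0 := by
  intro h
  have hdep := cross_eq_zero_dep h
  set u := (b 0).1; set w := (b 1).1
  have h1 : dot u w • u + (-(dot u u)) • w = 0 := by
    rw [neg_smul, ← hdep]; abel
  have h2 := coords_indep b h1
  have hu : dot u u = 0 := by omega
  have hu0 : u = 0 := dot_self_eq_zero hu
  have h3 : (1:ℤ) • u + (0:ℤ) • w = 0 := by simp [hu0]
  have := (coords_indep b h3).1
  omega

lemma gram_eq : gramDet b =
    dot (cross (b 0).1 (b 1).1) (cross (b 0).1 (b 1).1) := by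
  rw [gramDet, Matrix.det_fin_two]
  simp only [Matrix.of_apply]
  rw [lagrange]
  simp only [dot, Fin.sum_univ_three]
  ring

lemma dot_pos : 0 < dot (cross (b 0).1 (b 1).1) (cross (b 0).1 (b 1).1) := by
  rcases lt_or_eq_of_le (dot_self_nonneg (cross (b 0).1 (b 1).1)) with h | h
  · exact h
  · exact absurd (dot_self_eq_zero h.symm) (lambda_ne_zero b)

lemma mem_iff_dot (hP : IsPrimitiveLattice Λ) (v : Fin 3 → ℤ) :
    v ∈ Λ ↔ dot v (cross (b 0).1 (b 1).1) = 0 := by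
  set u := (b 0).1 with hu
  set w := (b 1).1 with hw
  set lam := cross u w with hlam
  constructor
  · intro hv
    obtain ⟨c₁, c₂, rfl⟩ := exists_coords b hv
    have : dot (c₁ • u + c₂ • w) lam = c₁ * dot u lam + c₂ * dot w lam := by
      simp [dot_expand]; ring
    rw [this, hlam, dot_cross_self_left, dot_cross_self_right]; ring
  · intro hv
    rw [hP]
    have hdl : (0:ℝ) < (dot lam lam : ℝ) := by exact_mod_cast dot_pos b
    set Ai : ℤ := dot (cross v w) lam
    set Bi : ℤ := - dot (cross v u) lam
    have key : ∀ i, toRealVec v i =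
        ((Ai : ℝ) / (dot lam lam : ℝ)) * toRealVec u i
          + ((Bi : ℝ) / (dot lam lam : ℝ)) * toRealVec w i := by
      intro i
      have hid := triple_identity u w v i
      rw [← hlam] at hid
      rw [hv] at hid
      have hidR : (dot lam lam : ℝ) * (v i : ℝ) = (Ai : ℝ) * (u i : ℝ) + (Bi : ℝ) * (w i : ℝ) := by
        have : dot lam lam * v i = Ai * u i + Bi * w i := by
          rw [show Ai * u i + Bi * w i = dot (cross v w) lam * u i - dot (cross v u) lam * w i by ring]
          rw [hid]; ring
        exact_mod_cast this
      simp only [toRealVec]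
      field_simp
      linarith [hidR]
    have hveq : toRealVec v = ((Ai : ℝ) / (dot lam lam : ℝ)) • toRealVec u
        + ((Bi : ℝ) / (dot lam lam : ℝ)) • toRealVec w := by
      funext i; simpa using key i
    rw [hveq]
    have hu' : toRealVec u ∈ Submodule.span ℝ (toRealVec '' (Λ : Set (Fin 3 → ℤ))) :=
      Submodule.subset_span ⟨u, (b 0).2, rfl⟩
    have hw' : toRealVec w ∈ Submodule.span ℝ (toRealVec '' (Λ : Set (Fin 3 → ℤ))) :=
      Submodule.subset_span ⟨w, (b 1).2, rfl⟩
    exact Submodule.add_mem _ (Submodule.smul_mem _ _ hu') (Submodule.smul_mem _ _ hw')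

end LatticeLemmas
section Counting

open SCLD

set_option maxHeartbeats 1000000

lemma myAbsLe {a b : ℝ} (h : a ^ 2 ≤ b ^ 2) (hb : 0 ≤ b) : |a| ≤ b := by
  rw [← Real.sqrt_sq_eq_abs, ← Real.sqrt_sq hb]; exact Real.sqrt_le_sqrt h

lemma myLeOf {a b : ℝ} (h : a ^ 2 ≤ b ^ 2) (hb : 0 ≤ b) : a ≤ b :=
  le_trans (le_abs_self a) (myAbsLe h hb)

lemma int_card_le_of_diam (t : Finset ℤ) (L : ℤ) (hL : 0 ≤ L)
    (h : ∀ x ∈ t, ∀ y ∈ t, x - y ≤ L) : (t.card : ℤ) ≤ L + 1 := by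
  rcases t.eq_empty_or_nonempty with rfl | ht
  · simp; omega
  · have hsub : t ⊆ Finset.Icc (t.min' ht) (t.min' ht + L) := by
      intro x hx
      rw [Finset.mem_Icc]
      exact ⟨t.min'_le x hx, by have := h x hx (t.min' ht) (t.min'_mem ht); omega⟩
    have := Finset.card_le_card hsub
    rw [Int.card_Icc] at this
    omega

variable {Λ : Submodule ℤ (Fin 3 → ℤ)} (b : Module.Basis (Fin 2) ℤ Λ)

lemma basis_fst_ne_zero : (b 0).1 ≠ 0 := by
  intro h
  have h3 : (1:ℤ) • (b 0).1 + (0:ℤ) • (b 1).1 = 0 := by simp [h]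
  have := (coords_indep b h3).1
  omega

open scoped Classical in
/-- coordinate function -/
noncomputable def fc (Λ : Submodule ℤ (Fin 3 → ℤ)) (b : Module.Basis (Fin 2) ℤ Λ)
    (v : Fin 3 → ℤ) : ℤ × ℤ :=
  if h : v ∈ Λ then ((b.repr ⟨v, h⟩) 0, (b.repr ⟨v, h⟩) 1) else 0

lemma fc_recon {v : Fin 3 → ℤ} (hv : v ∈ Λ) :
    v = (fc Λ b v).1 • (b 0).1 + (fc Λ b v).2 • (b 1).1 := by
  rw [fc, dif_pos hv]
  have h := b.sum_repr ⟨v, hv⟩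
  rw [Fin.sum_univ_two] at h
  have := congrArg (Subtype.val) h
  simpa using this.symm

lemma fc_inj {v v' : Fin 3 → ℤ} (hv : v ∈ Λ) (hv' : v' ∈ Λ)
    (h : fc Λ b v = fc Λ b v') : v = v' := by
  rw [fc_recon b hv, fc_recon b hv', h]

theorem count_lemma {T : ℝ} (hT : 1 ≤ T)
    (hu : vnorm (b 0).1 ≤ T) (hw : vnorm (b 1).1 ≤ T) :
    {v : Fin 3 → ℤ | v ∈ Λ ∧ vnorm v ≤ T}.Finite ∧
    (Set.ncard {v : Fin 3 → ℤ | v ∈ Λ ∧ vnorm v ≤ T} : ℝ)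
      * vnorm (cross (b 0).1 (b 1).1) ≤ 9 * T ^ 2 := by
  classical
  have hT0 : (0:ℝ) ≤ T := by linarith
  set u := (b 0).1 with hu_def
  set w := (b 1).1 with hw_def
  set lam := cross u w with hlam_def
  set S := {v : Fin 3 → ℤ | v ∈ Λ ∧ vnorm v ≤ T} with hS_def
  set d := vnorm lam with hd_def
  set nu := vnorm u with hnu_def
  have hdl_pos : (0:ℝ) < (dot lam lam : ℝ) := by exact_mod_cast dot_pos b
  have hd_sq : d ^ 2 = (dot lam lam : ℝ) := vnorm_sq lam
  have hd_pos : 0 < d := by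
    rw [hd_def, vnorm_eq]; exact Real.sqrt_pos.2 hdl_pos
  have hd_one : 1 ≤ d := by
    have h1 : (1:ℝ) ≤ (dot lam lam : ℝ) := by
      have := dot_pos b; exact_mod_cast this
    nlinarith
  have hnu_pos : 0 < nu := by
    rw [hnu_def, vnorm_eq]
    apply Real.sqrt_pos.2
    have h1 : dot u u ≠ 0 := fun h => basis_fst_ne_zero b (dot_self_eq_zero h)
    have h2 := dot_self_nonneg u
    have : (0:ℤ) < dot u u := by omega
    exact_mod_cast this
  have hnu_sq : nu ^ 2 = (dot u u : ℝ) := vnorm_sq u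
  have hw_sq : vnorm w ^ 2 = (dot w w : ℝ) := vnorm_sq w
  have huu0 : (0:ℝ) ≤ (dot u u : ℝ) := by exact_mod_cast dot_self_nonneg u
  have hwT : (dot w w : ℝ) ≤ T ^ 2 := by
    rw [← hw_sq]; nlinarith [vnorm_nonneg w]
  have hduT : d ≤ nu * T := by
    have hlag : (dot lam lam : ℤ) ≤ dot u u * dot w w := by
      rw [hlam_def, lagrange]; nlinarith [sq_nonneg (dot u w)]
    have hlagR : (dot lam lam : ℝ) ≤ (dot u u : ℝ) * (dot w w : ℝ) := by exact_mod_cast hlag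
    have h1 : d ^ 2 ≤ (nu * T) ^ 2 := by
      rw [hd_sq]
      calc (dot lam lam : ℝ) ≤ (dot u u : ℝ) * (dot w w : ℝ) := hlagR
      _ ≤ (dot u u : ℝ) * T ^ 2 := mul_le_mul_of_nonneg_left hwT huu0
      _ = (nu * T) ^ 2 := by rw [← hnu_sq]; ring
    exact myLeOf h1 (by positivity)
  have hnuT : nu ≤ T := hu
  have hdT2 : d ≤ T ^ 2 := by nlinarith
  set M1 : ℤ := ⌊T * T / d⌋ with hM1_def
  set M2 : ℤ := ⌊nu * T / d⌋ with hM2_def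
  have hM1_nonneg : 0 ≤ M1 := Int.le_floor.2 (by
    push_cast; exact div_nonneg (by positivity) hd_pos.le)
  have hM2_nonneg : 0 ≤ M2 := Int.le_floor.2 (by
    push_cast; exact div_nonneg (by positivity) hd_pos.le)
  have hcross_right : ∀ v, v ∈ Λ → cross u v = (fc Λ b v).2 • lam := by
    intro v hv
    conv_lhs => rw [fc_recon b hv]
    rw [hlam_def, cross_combo_right]
  have hcross_left : ∀ v, v ∈ Λ → cross v w = (fc Λ b v).1 • lam := by
    intro v hv
    conv_lhs => rw [fc_recon b hv]
    rw [hlam_def, cross_combo_left]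
  have habs : ∀ (c : ℤ) (x y : Fin 3 → ℤ), cross x y = c • lam →
      ((c:ℝ)) ^ 2 * (dot lam lam : ℝ) ≤ (dot x x : ℝ) * (dot y y : ℝ) := by
    intro c x y h
    have h1 : dot (cross x y) (cross x y) = c ^ 2 * dot lam lam := by
      rw [h]; simp [dot_expand]; ring
    have h2 : dot (cross x y) (cross x y) ≤ dot x x * dot y y := by
      rw [lagrange]; nlinarith [sq_nonneg (dot x y)]
    have := h1 ▸ h2
    exact_mod_cast this
  have hSdot : ∀ v ∈ S, (dot v v : ℝ) ≤ T ^ 2 := by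
    intro v hv
    rw [← vnorm_sq]
    nlinarith [vnorm_nonneg v, hv.2]
  have hc2_mem : ∀ v ∈ S, (fc Λ b v).2 ∈ Finset.Icc (-M2) M2 := by
    intro v hv
    have h := habs _ _ _ (hcross_right v hv.1)
    have hb : ((fc Λ b v).2 : ℝ) ^ 2 * (dot lam lam : ℝ) ≤ nu ^ 2 * T ^ 2 := by
      calc ((fc Λ b v).2 : ℝ) ^ 2 * (dot lam lam : ℝ) ≤ (dot u u : ℝ) * (dot v v : ℝ) := h
      _ ≤ nu ^ 2 * T ^ 2 := by
          rw [← hnu_sq]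
          exact mul_le_mul_of_nonneg_left (hSdot v hv) (by positivity)
    have habs2 : |((fc Λ b v).2 : ℝ)| ≤ nu * T / d := by
      apply myAbsLe ?_ (by positivity)
      rw [div_pow, le_div_iff₀ (by positivity)]
      calc ((fc Λ b v).2 : ℝ) ^ 2 * d ^ 2 = ((fc Λ b v).2 : ℝ) ^ 2 * (dot lam lam : ℝ) := by
            rw [hd_sq]
      _ ≤ nu ^ 2 * T ^ 2 := hb
      _ = (nu * T) ^ 2 := by ring
    rw [abs_le] at habs2
    have hup : (fc Λ b v).2 ≤ M2 := Int.le_floor.2 habs2.2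
    have hdn : -((fc Λ b v).2) ≤ M2 := Int.le_floor.2 (by push_cast; linarith [habs2.1])
    exact Finset.mem_Icc.2 ⟨by omega, hup⟩
  have hc1_mem : ∀ v ∈ S, (fc Λ b v).1 ∈ Finset.Icc (-M1) M1 := by
    intro v hv
    have h := habs _ _ _ (hcross_left v hv.1)
    have hb : ((fc Λ b v).1 : ℝ) ^ 2 * (dot lam lam : ℝ) ≤ T ^ 2 * T ^ 2 := by
      calc ((fc Λ b v).1 : ℝ) ^ 2 * (dot lam lam : ℝ) ≤ (dot v v : ℝ) * (dot w w : ℝ) := h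
      _ ≤ T ^ 2 * T ^ 2 := by
          have h1 := hSdot v hv
          have h3 : (0:ℝ) ≤ (dot v v : ℝ) := by exact_mod_cast dot_self_nonneg v
          have h4 : (0:ℝ) ≤ (dot w w : ℝ) := by exact_mod_cast dot_self_nonneg w
          nlinarith
    have habs2 : |((fc Λ b v).1 : ℝ)| ≤ T * T / d := by
      apply myAbsLe ?_ (by positivity)
      rw [div_pow, le_div_iff₀ (by positivity)]
      calc ((fc Λ b v).1 : ℝ) ^ 2 * d ^ 2 = ((fc Λ b v).1 : ℝ) ^ 2 * (dot lam lam : ℝ) := by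
            rw [hd_sq]
      _ ≤ T ^ 2 * T ^ 2 := hb
      _ = (T * T) ^ 2 := by ring
    rw [abs_le] at habs2
    have hup : (fc Λ b v).1 ≤ M1 := Int.le_floor.2 habs2.2
    have hdn : -((fc Λ b v).1) ≤ M1 := Int.le_floor.2 (by push_cast; linarith [habs2.1])
    exact Finset.mem_Icc.2 ⟨by omega, hup⟩
  -- finiteness
  have himg : (fc Λ b '' S).Finite := by
    apply Set.Finite.subset
      (Finset.Icc (-M1) M1 ×ˢ Finset.Icc (-M2) M2 : Finset (ℤ × ℤ)).finite_toSet
    rintro p ⟨v, hv, rfl⟩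
    simp only [Finset.coe_product, Set.mem_prod, Finset.mem_coe]
    exact ⟨hc1_mem v hv, hc2_mem v hv⟩
  have hinj : Set.InjOn (fc Λ b) S := fun v hv v' hv' h => fc_inj b hv.1 hv'.1 h
  have hfin : S.Finite := Set.Finite.of_finite_image himg hinj
  refine ⟨hfin, ?_⟩
  set s := hfin.toFinset with hs_def
  have hncard : Set.ncard S = s.card := by
    exact Set.ncard_eq_toFinset_card S hfin
  set L : ℤ := ⌊2 * T / nu⌋ with hL_def
  have hL_nonneg : 0 ≤ L := Int.le_floor.2 (by
    push_cast; exact div_nonneg (by positivity) hnu_pos.le)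
  have hcard : (s.card : ℤ) ≤ (2 * M2 + 1) * (L + 1) := by
    have hfib := Finset.card_eq_sum_card_fiberwise
      (f := fun v => (fc Λ b v).2) (s := s) (t := Finset.Icc (-M2) M2) ?_
    · rw [hfib]
      push_cast
      calc (∑ y ∈ Finset.Icc (-M2) M2,
            ((s.filter (fun v => (fc Λ b v).2 = y)).card : ℤ))
          ≤ ∑ y ∈ Finset.Icc (-M2) M2, (L + 1) := by
            apply Finset.sum_le_sum
            intro y _
            set tf := s.filter (fun v => (fc Λ b v).2 = y) with htf
            have hmemS : ∀ v ∈ tf, v ∈ S ∧ (fc Λ b v).2 = y := by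
              intro v hv
              rw [htf, Finset.mem_filter] at hv
              exact ⟨(hfin.mem_toFinset).1 hv.1, hv.2⟩
            have himg2 : tf.card = (tf.image (fun v => (fc Λ b v).1)).card := by
              rw [Finset.card_image_of_injOn]
              intro v hv v' hv' h
              have h1 := hmemS v (Finset.mem_coe.1 hv)
              have h2 := hmemS v' (Finset.mem_coe.1 hv')
              apply fc_inj b h1.1.1 h2.1.1
              have hc2eq : (fc Λ b v).2 = (fc Λ b v').2 := by rw [h1.2, h2.2]
              exact Prod.ext h hc2eq
            rw [himg2]
            apply int_card_le_of_diam _ L hL_nonneg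
            intro x hx y' hy
            simp only [Finset.mem_image] at hx hy
            obtain ⟨v, hv, rfl⟩ := hx
            obtain ⟨v', hv', rfl⟩ := hy
            have h1 := hmemS v hv
            have h2 := hmemS v' hv'
            set m : ℤ := (fc Λ b v).1 - (fc Λ b v').1 with hm_def
            have hdiff : v - v' = m • u := by
              have e1 := fc_recon b h1.1.1
              have e2 := fc_recon b h2.1.1
              have hc2 : (fc Λ b v).2 = (fc Λ b v').2 := by rw [h1.2, h2.2]
              funext i
              have e1i := congrFun e1 i
              have e2i := congrFun e2 i
              simp only [Pi.add_apply, Pi.smul_apply, smul_eq_mul] at e1i e2i ⊢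
              rw [Pi.sub_apply, e1i, e2i, hc2, hm_def]; ring
            have hvv0 : (0:ℝ) ≤ (dot v v : ℝ) := by exact_mod_cast dot_self_nonneg v
            have hv'v'0 : (0:ℝ) ≤ (dot v' v' : ℝ) := by exact_mod_cast dot_self_nonneg v'
            have hdd : (dot (v - v') (v - v') : ℝ) ≤ 4 * T ^ 2 := by
              have hexp : dot (v - v') (v - v') = dot v v - 2 * dot v v' + dot v' v' := by
                simp [dot_expand]; ring
              have hcs : (dot v v' : ℤ) ^ 2 ≤ dot v v * dot v' v' := cauchy_schwarz v v'
              have hb1 := hSdot v h1.1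
              have hb2 := hSdot v' h2.1
              have hcsR : ((dot v v' : ℝ)) ^ 2 ≤ (dot v v : ℝ) * (dot v' v' : ℝ) := by
                exact_mod_cast hcs
              have hlow : -(T^2) ≤ (dot v v' : ℝ) := by
                nlinarith
              have hexpR : (dot (v - v') (v - v') : ℝ) =
                  (dot v v : ℝ) - 2 * (dot v v' : ℝ) + (dot v' v' : ℝ) := by
                exact_mod_cast congrArg (fun z : ℤ => (z : ℝ)) hexp
              rw [hexpR]; linarith
            have hmm : (dot (v - v') (v - v') : ℝ) = (m : ℝ) ^ 2 * (dot u u : ℝ) := by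
              have : dot (v - v') (v - v') = m ^ 2 * dot u u := by
                rw [hdiff]; simp [dot_expand]; ring
              exact_mod_cast this
            have hmb : (m : ℝ) ≤ 2 * T / nu := by
              apply myLeOf ?_ (by positivity)
              rw [div_pow, le_div_iff₀ (by positivity)]
              calc (m:ℝ) ^ 2 * nu ^ 2 = (m:ℝ) ^ 2 * (dot u u : ℝ) := by rw [hnu_sq]
              _ = (dot (v - v') (v - v') : ℝ) := hmm.symm
              _ ≤ 4 * T ^ 2 := hdd
              _ = (2 * T) ^ 2 := by ring
            exact Int.le_floor.2 hmb
      _ = (2 * M2 + 1) * (L + 1) := by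
            rw [Finset.sum_const, nsmul_eq_mul, Int.card_Icc]
            have h5 : ((M2 + 1 - -M2).toNat : ℤ) = 2 * M2 + 1 := by
              rw [Int.toNat_of_nonneg (by omega)]; ring
            rw [h5]
    · intro v hv
      exact hc2_mem v ((hfin.mem_toFinset).1 hv)
  rw [hncard]
  have hcardR : (s.card : ℝ) ≤ (2 * (M2:ℝ) + 1) * ((L:ℝ) + 1) := by exact_mod_cast hcard
  have hM2R : (M2 : ℝ) ≤ nu * T / d := Int.floor_le _
  have hLR : (L : ℝ) ≤ 2 * T / nu := Int.floor_le _
  have hM2R' : (M2 : ℝ) * d ≤ nu * T := by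
    have h := mul_le_mul_of_nonneg_right hM2R hd_pos.le
    rwa [div_mul_cancel₀ _ (ne_of_gt hd_pos)] at h
  have hLR' : (L : ℝ) * nu ≤ 2 * T := by
    have h := mul_le_mul_of_nonneg_right hLR hnu_pos.le
    rwa [div_mul_cancel₀ _ (ne_of_gt hnu_pos)] at h
  have hM2R0 : (0:ℝ) ≤ (M2:ℝ) := by exact_mod_cast hM2_nonneg
  have hLR0 : (0:ℝ) ≤ (L:ℝ) := by exact_mod_cast hL_nonneg
  have key : ((2 * (M2:ℝ) + 1) * ((L:ℝ) + 1)) * d ≤ 9 * T ^ 2 := by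
    have e1 : (2 * (M2:ℝ) + 1) * ((L:ℝ) + 1) * d
        = 2 * ((M2:ℝ) * d) * (L:ℝ) + 2 * ((M2:ℝ) * d) + (L:ℝ) * d + d := by ring
    rw [e1]
    have f1 : 2 * ((M2:ℝ) * d) * (L:ℝ) ≤ 2 * (nu * T) * (L:ℝ) := by nlinarith
    have f3 : 2 * T * ((L:ℝ) * nu) ≤ 2 * T * (2 * T) := by nlinarith
    have f4 : 2 * ((M2:ℝ) * d) ≤ 2 * (nu * T) := by linarith
    have f5 : nu * T ≤ T * T := by nlinarith
    have f6 : (L:ℝ) * d ≤ (L:ℝ) * (nu * T) := by nlinarith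
    have f8 : ((L:ℝ) * nu) * T ≤ 2 * T * T := by nlinarith
    nlinarith
  calc (s.card : ℝ) * d ≤ ((2 * (M2:ℝ) + 1) * ((L:ℝ) + 1)) * d :=
        mul_le_mul_of_nonneg_right hcardR hd_pos.le
  _ ≤ 9 * T ^ 2 := key

end Counting
section Assembly

open SCLD

set_option maxHeartbeats 1000000

variable {Λ : Submodule ℤ (Fin 3 → ℤ)} (b : Module.Basis (Fin 2) ℤ Λ)

lemma sqrt_gram : Real.sqrt ((gramDet b : ℝ)) = vnorm (cross (b 0).1 (b 1).1) := by
  rw [gram_eq b, vnorm_eq]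

lemma one_le_vnorm_cross : 1 ≤ vnorm (cross (b 0).1 (b 1).1) := by
  rw [vnorm_eq]
  have h1 : (1:ℝ) ≤ (dot (cross (b 0).1 (b 1).1) (cross (b 0).1 (b 1).1) : ℝ) := by
    have := dot_pos b; exact_mod_cast this
  nlinarith [Real.sq_sqrt (by linarith : (0:ℝ) ≤ (dot (cross (b 0).1 (b 1).1) (cross (b 0).1 (b 1).1) : ℝ)),
    Real.sqrt_nonneg ((dot (cross (b 0).1 (b 1).1) (cross (b 0).1 (b 1).1) : ℝ))]

lemma prim_count_mul_le {T : ℝ} (hT : 1 ≤ T)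
    (hu : vnorm (b 0).1 ≤ T) (hw : vnorm (b 1).1 ≤ T) :
    (latPrimCount Λ T : ℝ) * vnorm (cross (b 0).1 (b 1).1) ≤ 9 * T ^ 2 := by
  obtain ⟨hfin, hle⟩ := count_lemma b hT hu hw
  have hsub : {v : Fin 3 → ℤ | v ∈ Λ ∧ IsPrimitive v ∧ vnorm v ≤ T} ⊆
      {v : Fin 3 → ℤ | v ∈ Λ ∧ vnorm v ≤ T} := fun v hv => ⟨hv.1, hv.2.2⟩
  have hmono := Set.ncard_le_ncard hsub hfin
  have h1 : (latPrimCount Λ T : ℝ) ≤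
      (Set.ncard {v : Fin 3 → ℤ | v ∈ Λ ∧ vnorm v ≤ T} : ℝ) := by
    rw [latPrimCount]; exact_mod_cast hmono
  have h2 : 0 ≤ vnorm (cross (b 0).1 (b 1).1) := vnorm_nonneg _
  nlinarith

lemma abs_coord_le (v : Fin 3 → ℤ) (i : Fin 3) : |(v i : ℝ)| ≤ vnorm v := by
  rw [vnorm_eq]
  apply myAbsLe ?_ (Real.sqrt_nonneg _)
  rw [Real.sq_sqrt (by exact_mod_cast dot_self_nonneg v : (0:ℝ) ≤ (dot v v : ℝ))]
  have : (v i) ^ 2 ≤ dot v v := by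
    have h1 : v i * v i ≤ dot v v :=
      Finset.single_le_sum (f := fun x => v x * v x)
        (fun x _ => mul_self_nonneg (v x)) (Finset.mem_univ i)
    nlinarith
  exact_mod_cast this

theorem main_bound {α : Type*} (A T : ℝ) (hA : 0 < A) (hT : 16 ≤ T)
    (lat : α → Submodule ℤ (Fin 3 → ℤ)) (hinj : Function.Injective lat)
    (hprim : ∀ a, IsPrimitiveLattice (lat a))
    (hbas : ∀ a, ∃ b : Module.Basis (Fin 2) ℤ (lat a), (∀ i, vnorm ((b i) : Fin 3 → ℤ) ≤ T) ∧
        T ^ 2 / Real.log T ^ A < Real.sqrt ((gramDet b : ℝ)) ∧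
        Real.sqrt ((gramDet b : ℝ)) ≤ T ^ 2)
    (s : Finset α) :
    ∑ x ∈ s, ((latPrimCount (lat x) T : ℝ)) ^ 3
      ≤ (157464 * (A / Real.log 2 + 1)) * T ^ 6 * Real.log (Real.log T) := by
  classical
  have hT1 : (1:ℝ) ≤ T := by linarith
  have hT0 : (0:ℝ) < T := by linarith
  -- log facts
  have hlog2_pos : (0:ℝ) < Real.log 2 := Real.log_pos (by norm_num)
  have hlog16 : Real.exp 1 ≤ Real.log 16 := by
    have h1 : Real.log 16 = 4 * Real.log 2 := by
      rw [show (16:ℝ) = 2 ^ (4:ℕ) by norm_num, Real.log_pow]; push_cast; ring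
    have h2 := Real.log_two_gt_d9
    have h3 := Real.exp_one_lt_d9
    rw [h1]; nlinarith
  have hlogT_e : Real.exp 1 ≤ Real.log T :=
    le_trans hlog16 (Real.log_le_log (by norm_num) hT)
  have hlogT1 : 1 ≤ Real.log T := by
    have := Real.exp_one_gt_d9; nlinarith
  have hlogT_pos : (0:ℝ) < Real.log T := by linarith
  have hloglog : 1 ≤ Real.log (Real.log T) := by
    have h1 : Real.log (Real.exp 1) ≤ Real.log (Real.log T) :=
      Real.log_le_log (Real.exp_pos 1) hlogT_e
    rwa [Real.log_exp] at h1
  set Lg : ℝ := Real.log T ^ A with hLg_def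
  have hLg1 : 1 ≤ Lg := Real.one_le_rpow hlogT1 hA.le
  have hLg_pos : 0 < Lg := by linarith
  -- choose bases
  choose B hBnorm hBlow hBhigh using hbas
  set lamv : α → (Fin 3 → ℤ) := fun a => cross ((B a) 0).1 ((B a) 1).1 with hlamv_def
  set d : α → ℝ := fun a => vnorm (lamv a) with hd_def
  have hd_eq : ∀ a, Real.sqrt ((gramDet (B a) : ℝ)) = d a := fun a => sqrt_gram (B a)
  have hd1 : ∀ a, 1 ≤ d a := fun a => one_le_vnorm_cross (B a)
  have hd_pos : ∀ a, 0 < d a := fun a => by linarith [hd1 a]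
  have hd_low : ∀ a, T ^ 2 / Lg < d a := fun a => by
    have := hBlow a; rwa [hd_eq a] at this
  have hd_high : ∀ a, d a ≤ T ^ 2 := fun a => by
    have := hBhigh a; rwa [hd_eq a] at this
  have hx1 : ∀ a, 1 ≤ T ^ 2 / d a := fun a => by
    rw [le_div_iff₀ (hd_pos a)]; rw [one_mul]; exact hd_high a
  have hx_pos : ∀ a, 0 < T ^ 2 / d a := fun a => by linarith [hx1 a]
  have hxLg : ∀ a, T ^ 2 / d a < Lg := fun a => by
    have h1 := hd_low a
    rw [div_lt_iff₀ (hd_pos a)]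
    rw [div_lt_iff₀ hLg_pos] at h1
    linarith [mul_comm (d a) Lg ▸ h1]
  -- the primitive count bound
  have hP : ∀ a, (latPrimCount (lat a) T : ℝ) * d a ≤ 9 * T ^ 2 := fun a =>
    prim_count_mul_le (B a) hT1 (hBnorm a 0) (hBnorm a 1)
  -- dyadic exponent
  set k : α → ℕ := fun a => ⌊Real.logb 2 (T ^ 2 / d a)⌋₊ with hk_def
  have hk_low : ∀ a, (2:ℝ) ^ (k a) ≤ T ^ 2 / d a := by
    intro a
    have h1 : ((k a : ℝ)) ≤ Real.logb 2 (T ^ 2 / d a) :=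
      Nat.floor_le (Real.logb_nonneg (by norm_num) (hx1 a))
    have h2 : (2:ℝ) ^ ((k a : ℝ)) ≤ (2:ℝ) ^ (Real.logb 2 (T ^ 2 / d a)) :=
      (Real.rpow_le_rpow_left_iff (by norm_num)).2 h1
    rwa [Real.rpow_natCast, Real.rpow_logb (by norm_num) (by norm_num) (hx_pos a)] at h2
  have hk_high : ∀ a, T ^ 2 / d a < (2:ℝ) ^ (k a + 1) := by
    intro a
    have h1 : Real.logb 2 (T ^ 2 / d a) < ((k a : ℝ)) + 1 := Nat.lt_floor_add_one _
    have h2 : (2:ℝ) ^ (Real.logb 2 (T ^ 2 / d a)) < (2:ℝ) ^ (((k a : ℝ)) + 1) := by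
      apply Real.rpow_lt_rpow_left_iff (by norm_num : (1:ℝ) < 2) |>.2 h1
    rw [Real.rpow_logb (by norm_num) (by norm_num) (hx_pos a)] at h2
    calc T ^ 2 / d a < (2:ℝ) ^ (((k a : ℝ)) + 1) := h2
    _ = (2:ℝ) ^ (k a + 1) := by
        rw [← Real.rpow_natCast 2 (k a + 1)]; push_cast; ring_nf
  set K : ℕ := ⌊Real.logb 2 Lg⌋₊ with hK_def
  have hkK : ∀ a, k a ≤ K := by
    intro a
    apply Nat.floor_mono
    exact Real.logb_le_logb_of_le (by norm_num) (hx_pos a) (le_of_lt (hxLg a))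
  -- fiberwise split
  have hsplit : ∑ x ∈ s, ((latPrimCount (lat x) T : ℝ)) ^ 3 =
      ∑ j ∈ Finset.range (K + 1), ∑ x ∈ s.filter (fun a => k a = j),
        ((latPrimCount (lat x) T : ℝ)) ^ 3 :=
    (Finset.sum_fiberwise_of_maps_to
      (fun a _ => Finset.mem_range.2 (Nat.lt_succ_of_le (hkK a))) _).symm
  rw [hsplit]
  -- per-band bound
  have hband : ∀ j ∈ Finset.range (K + 1),
      ∑ x ∈ s.filter (fun a => k a = j), ((latPrimCount (lat x) T : ℝ)) ^ 3
        ≤ 157464 * T ^ 6 := by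
    intro j _
    set sj := s.filter (fun a => k a = j) with hsj_def
    rcases sj.eq_empty_or_nonempty with he | hne
    · rw [he]; simp; positivity
    have hmem : ∀ a ∈ sj, k a = j := by
      intro a ha; rw [hsj_def, Finset.mem_filter] at ha; exact ha.2
    have h2j_pos : (0:ℝ) < (2:ℝ) ^ j := by positivity
    -- T^2 / 2^j ≥ 1 (witness)
    obtain ⟨a0, ha0⟩ := hne
    have hTj1 : (2:ℝ) ^ j ≤ T ^ 2 := by
      have h1 := hk_low a0
      rw [hmem a0 ha0] at h1
      calc (2:ℝ) ^ j ≤ T ^ 2 / d a0 := h1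
      _ ≤ T ^ 2 := by
          rw [div_le_iff₀ (hd_pos a0)]
          nlinarith [hd1 a0, sq_nonneg T]
    -- each term bound
    have hterm : ∀ a ∈ sj, ((latPrimCount (lat a) T : ℝ)) ^ 3 ≤ (9 * 2 ^ (j + 1)) ^ 3 := by
      intro a ha
      have hkj := hmem a ha
      have h1 : T ^ 2 < d a * 2 ^ (j + 1) := by
        have := hk_high a
        rw [hkj] at this
        rw [div_lt_iff₀ (hd_pos a)] at this
        linarith [this]
      have h2 : (latPrimCount (lat a) T : ℝ) ≤ 9 * 2 ^ (j + 1) := by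
        have h3 := hP a
        have h4 : (latPrimCount (lat a) T : ℝ) * d a ≤ 9 * (d a * 2 ^ (j + 1)) := by nlinarith
        have h5 : (latPrimCount (lat a) T : ℝ) * d a ≤ (9 * 2 ^ (j + 1)) * d a := by
          nlinarith
        exact le_of_mul_le_mul_right h5 (hd_pos a)
      have h0 : (0:ℝ) ≤ (latPrimCount (lat a) T : ℝ) := Nat.cast_nonneg _
      exact pow_le_pow_left₀ h0 h2 3
    -- cardinality bound via normal vectors
    set M : ℤ := ⌊T ^ 2 / (2:ℝ) ^ j⌋ with hM_def
    have hM1 : 1 ≤ M := by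
      apply Int.le_floor.2
      push_cast
      rw [le_div_iff₀ h2j_pos, one_mul]; exact hTj1
    have hdM : ∀ a ∈ sj, d a ≤ T ^ 2 / (2:ℝ) ^ j := by
      intro a ha
      have h1 := hk_low a
      rw [hmem a ha] at h1
      rw [le_div_iff₀ h2j_pos]
      rw [le_div_iff₀ (hd_pos a)] at h1
      nlinarith
    have hcoords : ∀ a ∈ sj, ∀ i : Fin 3, lamv a i ∈ Finset.Icc (-M) M := by
      intro a ha i
      have h1 : |(lamv a i : ℝ)| ≤ d a := abs_coord_le (lamv a) i
      have h2 := hdM a ha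
      rw [abs_le] at h1
      have hup : lamv a i ≤ M := Int.le_floor.2 (by linarith [h1.2])
      have hdn : -(lamv a i) ≤ M := Int.le_floor.2 (by push_cast; linarith [h1.1])
      exact Finset.mem_Icc.2 ⟨by omega, hup⟩
    have hinj2 : Set.InjOn (fun a => (lamv a 0, lamv a 1, lamv a 2)) ↑sj := by
      intro a ha a' ha' h
      simp only [Prod.mk.injEq] at h
      have hlameq : lamv a = lamv a' := by
        funext i; fin_cases i
        · exact h.1
        · exact h.2.1
        · exact h.2.2
      apply hinj
      ext v
      rw [mem_iff_dot (B a) (hprim a) v, mem_iff_dot (B a') (hprim a') v]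
      rw [show cross ((B a) 0).1 ((B a) 1).1 = lamv a from rfl,
        show cross ((B a') 0).1 ((B a') 1).1 = lamv a' from rfl, hlameq]
    have hcard : (sj.card : ℝ) ≤ (2 * (M:ℝ) + 1) ^ 3 := by
      have h1 := Finset.card_le_card_of_injOn (fun a => (lamv a 0, lamv a 1, lamv a 2))
        (fun a ha => by
          simp only [Finset.mem_coe, Finset.mem_product]
          exact ⟨hcoords a ha 0, hcoords a ha 1, hcoords a ha 2⟩)
        hinj2 (t := Finset.Icc (-M) M ×ˢ Finset.Icc (-M) M ×ˢ Finset.Icc (-M) M)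
      have h2 : (Finset.Icc (-M) M ×ˢ Finset.Icc (-M) M ×ˢ Finset.Icc (-M) M).card
          = ((2 * M + 1).toNat) ^ 3 := by
        rw [Finset.card_product, Finset.card_product, Int.card_Icc]
        have : (M + 1 - -M).toNat = (2 * M + 1).toNat := by congr 1; ring
        rw [this]; ring
      rw [h2] at h1
      have h3 : ((2 * M + 1).toNat : ℝ) = 2 * (M:ℝ) + 1 := by
        have : ((2 * M + 1).toNat : ℤ) = 2 * M + 1 := Int.toNat_of_nonneg (by omega)
        exact_mod_cast this
      calc (sj.card : ℝ) ≤ (((2 * M + 1).toNat : ℕ) : ℝ) ^ 3 := by exact_mod_cast h1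
      _ = (2 * (M:ℝ) + 1) ^ 3 := by rw [h3]
    have hMreal : (M:ℝ) ≤ T ^ 2 / (2:ℝ) ^ j := Int.floor_le _
    have hMreal1 : (1:ℝ) ≤ (M:ℝ) := by exact_mod_cast hM1
    have hcard2 : (sj.card : ℝ) ≤ 27 * (T ^ 2 / (2:ℝ) ^ j) ^ 3 := by
      calc (sj.card : ℝ) ≤ (2 * (M:ℝ) + 1) ^ 3 := hcard
      _ ≤ (3 * (T ^ 2 / (2:ℝ) ^ j)) ^ 3 := by
          apply pow_le_pow_left₀ (by linarith)
          linarith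
      _ = 27 * (T ^ 2 / (2:ℝ) ^ j) ^ 3 := by ring
    -- combine
    calc ∑ x ∈ sj, ((latPrimCount (lat x) T : ℝ)) ^ 3
        ≤ ∑ x ∈ sj, (9 * 2 ^ (j + 1) : ℝ) ^ 3 := Finset.sum_le_sum hterm
    _ = (sj.card : ℝ) * (9 * 2 ^ (j + 1)) ^ 3 := by rw [Finset.sum_const, nsmul_eq_mul]
    _ ≤ 27 * (T ^ 2 / (2:ℝ) ^ j) ^ 3 * (9 * 2 ^ (j + 1)) ^ 3 := by
        apply mul_le_mul_of_nonneg_right hcard2 (by positivity)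
    _ = 157464 * T ^ 6 := by
        field_simp
        ring
  -- sum the bands
  calc ∑ j ∈ Finset.range (K + 1), ∑ x ∈ s.filter (fun a => k a = j),
        ((latPrimCount (lat x) T : ℝ)) ^ 3
      ≤ ∑ j ∈ Finset.range (K + 1), (157464 * T ^ 6 : ℝ) := Finset.sum_le_sum hband
  _ = ((K : ℝ) + 1) * (157464 * T ^ 6) := by
      rw [Finset.sum_const, nsmul_eq_mul, Finset.card_range]; push_cast; ring
  _ ≤ ((A / Real.log 2 + 1) * Real.log (Real.log T)) * (157464 * T ^ 6) := by
      apply mul_le_mul_of_nonneg_right ?_ (by positivity)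
      have hK_le : (K : ℝ) ≤ Real.logb 2 Lg :=
        Nat.floor_le (Real.logb_nonneg (by norm_num) hLg1)
      have hlogb : Real.logb 2 Lg = A * Real.log (Real.log T) / Real.log 2 := by
        rw [Real.logb, hLg_def, Real.log_rpow hlogT_pos]
      have h1 : (K : ℝ) ≤ A * Real.log (Real.log T) / Real.log 2 := by
        rw [← hlogb]; exact hK_le
      have h2 : A * Real.log (Real.log T) / Real.log 2
          = (A / Real.log 2) * Real.log (Real.log T) := by ring
      have h3 : (0:ℝ) < A / Real.log 2 := by positivity
      nlinarith
  _ = (157464 * (A / Real.log 2 + 1)) * T ^ 6 * Real.log (Real.log T) := by ring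

end Assembly
/-- for any `A > 0`,
`Σ_Λ P_Λ(T)³ ≪ T⁶·log log T`, summing over primitive rank-2 sublattices `Λ ⊆ ℤ³`
bounded by `T` with `T²/(log T)^A < det(Λ) ≤ T²`. -/
theorem sum_cubes_large_determinant (A : ℝ) (hA : 0 < A) :
    ∃ K : ℝ, 0 < K ∧ ∀ T : ℝ, 16 ≤ T →
      (∑' Λ : {Λ : Submodule ℤ (Fin 3 → ℤ) // IsPrimitiveLattice Λ ∧
          Module.finrank ℤ Λ = 2 ∧
          ∃ b : Module.Basis (Fin 2) ℤ Λ, (∀ i, vnorm (b i).1 ≤ T) ∧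
            T ^ 2 / Real.log T ^ A < Real.sqrt ((gramDet b : ℝ)) ∧
            Real.sqrt ((gramDet b : ℝ)) ≤ T ^ 2},
        ((latPrimCount Λ.1 T : ℝ)) ^ 3) ≤ K * T ^ 6 * Real.log (Real.log T) := by
  have hlog2_pos : (0:ℝ) < Real.log 2 := Real.log_pos (by norm_num)
  refine ⟨157464 * (A / Real.log 2 + 1), by positivity, ?_⟩
  intro T hT
  -- nonnegativity of the RHS
  have hT0 : (0:ℝ) < T := by linarith
  have hlogT1 : 1 ≤ Real.log T := by
    have h1 : Real.log 16 ≤ Real.log T := Real.log_le_log (by norm_num) hT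
    have h2 : Real.log 16 = 4 * Real.log 2 := by
      rw [show (16:ℝ) = 2 ^ (4:ℕ) by norm_num, Real.log_pow]; push_cast; ring
    have h3 := Real.log_two_gt_d9
    nlinarith
  have hloglog : 0 ≤ Real.log (Real.log T) := Real.log_nonneg hlogT1
  apply tsum_le_of_sum_le' (by positivity)
  intro s
  exact main_bound A T hA hT Subtype.val Subtype.val_injective
    (fun a => a.2.1) (fun a => a.2.2.2) s
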